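/- Let D be a defeasible theory and (⟨T_{D,λ}, F_{D,λ}⟩)_{λ} the transfinite sequence of interpretations defined for D under the NDL well-founded semantics (I₀=⟨∅,∅⟩, I_{λ+1}=W_D(I_λ), componentwise unions at limits). For every ordinal λ ≥ 0 there exists an ordinal η ≥ 0 such that for every literal p ∈ Lit(D): (1) if p ∈ T_{D,λ} then p ∈ X_D↑η, and (2) if p ∈ F_{D,λ} then p ∉ β_D(X_D↑η). -/

import Mathlib

namespace DLWFS

universe u

/-- Ground literals over a type `A` of atoms: atoms and their classical complements. -/
inductive Lit (A : Type u) : Type u where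
  | pos : A → Lit A
  | neg : A → Lit A

/-- The classical complement `p̄` of a literal `p`. -/
def Lit.compl {A : Type u} : Lit A → Lit A
  | .pos a => .neg a
  | .neg a => .pos a

/-- The three kinds of rules of a defeasible theory. -/
inductive RuleKind : Type where
  | strict
  | defeasible
  | defeater
deriving DecidableEq

/-- A rule of a defeasible theory: a kind, a body (a set of literals) and a head literal. -/
structure DRule (A : Type u) where
  kind : RuleKind
  body : Set (Lit A)
  head : Lit A

/-- A defeasible theory `D = ⟨R, C, ≺⟩`. -/
structure DTheory (A : Type u) where
  rules : Set (DRule A)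
  conflicts : Set (Set (Lit A))
  prec : DRule A → DRule A → Prop

namespace DTheory

variable {A : Type u}

/-- The strict rules `R_s`. -/
def Rs (D : DTheory A) : Set (DRule A) := {r ∈ D.rules | r.kind = RuleKind.strict}

/-- The defeasible rules `R_d`. -/
def Rd (D : DTheory A) : Set (DRule A) := {r ∈ D.rules | r.kind = RuleKind.defeasible}

/-- The defeater rules `R_u`. -/
def Ru (D : DTheory A) : Set (DRule A) := {r ∈ D.rules | r.kind = RuleKind.defeater}

/-- `C[p]`: the conflict sets containing literal `p`. -/
def Cset (D : DTheory A) (p : Lit A) : Set (Set (Lit A)) := {c ∈ D.conflicts | p ∈ c}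

/-- Structural conditions in the definition of a defeasible theory: a countable set of
rules with finite bodies, a countable set of finite conflict sets containing every
minimal conflict set `{p, ¬p}`, and an acyclic priority relation over non-strict rules. -/
def WellFormed (D : DTheory A) : Prop :=
  D.rules.Countable ∧ D.conflicts.Countable ∧
  (∀ r ∈ D.rules, r.body.Finite) ∧
  (∀ c ∈ D.conflicts, c.Finite) ∧
  (∀ p : A, ({Lit.pos p, Lit.neg p} : Set (Lit A)) ∈ D.conflicts) ∧
  (∀ r s, D.prec r s → r.kind ≠ RuleKind.strict ∧ s.kind ≠ RuleKind.strict) ∧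
  (∀ r, ¬ Relation.TransGen D.prec r r)

/-- `C = C_MIN`: the conflict sets are exactly the minimal ones `{p, ¬p}`. -/
def MinimalConflicts (D : DTheory A) : Prop :=
  D.conflicts = {c | ∃ p : A, c = ({Lit.pos p, Lit.neg p} : Set (Lit A))}

end DTheory

/-- A 3-valued interpretation: a pair `⟨T, F⟩` of sets. -/
abbrev Interp (L : Type u) : Type u := Set L × Set L

variable {A : Type u}

/-- `S` is ADL-unfounded with respect to theory `D` and interpretation `I = ⟨T, F⟩`. -/
def ADLUnfounded (D : DTheory A) (I : Interp (Lit A)) (S : Set (Lit A)) : Prop :=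
  ∀ p ∈ S,
    (∀ r ∈ D.Rs, r.head = p → (r.body ∩ (I.2 ∪ S)).Nonempty) ∧
    (∀ r ∈ D.Rd, r.head = p →
      (r.body ∩ (I.2 ∪ S)).Nonempty ∨
      ∃ c ∈ D.conflicts, p ∈ c ∧
        ∀ q ∈ c \ {p}, ∃ s ∈ D.rules, s.head = q ∧ s.body ⊆ I.1 ∧
          (D.prec r s ∨ s.kind = RuleKind.strict))

/-- `S` is NDL-unfounded with respect to theory `D` and interpretation `I = ⟨T, F⟩`. -/
def NDLUnfounded (D : DTheory A) (I : Interp (Lit A)) (S : Set (Lit A)) : Prop :=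
  ∀ p ∈ S,
    (∀ r ∈ D.Rs, r.head = p → (r.body ∩ (I.2 ∪ S)).Nonempty) ∧
    (∀ r ∈ D.Rd, r.head = p →
      (r.body ∩ (I.2 ∪ S)).Nonempty ∨
      ∃ c ∈ D.conflicts, p ∈ c ∧
        ∀ q ∈ c \ {p}, ∃ s ∈ D.rules, s.head = q ∧ s.body ⊆ I.1 ∧
          ¬ D.prec s r)

/-- `U_D(I)` for ADL: the union of all ADL-unfounded sets. -/
def UA (D : DTheory A) (I : Interp (Lit A)) : Set (Lit A) :=
  ⋃₀ {S | ADLUnfounded D I S}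

/-- `U_D(I)` for NDL: the union of all NDL-unfounded sets. -/
def UN (D : DTheory A) (I : Interp (Lit A)) : Set (Lit A) :=
  ⋃₀ {S | NDLUnfounded D I S}

/-- `T_D(I)`: the literals having a witness of provability with respect to `I = ⟨T, F⟩`. -/
def TD (D : DTheory A) (I : Interp (Lit A)) : Set (Lit A) :=
  {p | ∃ r ∈ D.rules, r.head = p ∧ r.body ⊆ I.1 ∧
    (r.kind = RuleKind.strict ∨
      (r.kind = RuleKind.defeasible ∧
        ∀ c ∈ D.conflicts, p ∈ c →
          ∃ q ∈ c \ {p}, ∀ s ∈ D.rules, s.head = q →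
            (D.prec s r ∨ (s.body ∩ I.2).Nonempty)))}

/-- `W_D` for ADL. -/
def WA (D : DTheory A) (I : Interp (Lit A)) : Interp (Lit A) := (TD D I, UA D I)

/-- `W_D` for NDL. -/
def WN (D : DTheory A) (I : Interp (Lit A)) : Interp (Lit A) := (TD D I, UN D I)

/-- `I` is the well-founded model for the operator `W`: the least fixpoint of `W`
(componentwise order). -/
def IsWFModel {L : Type u} (W : Interp L → Interp L) (I : Interp L) : Prop :=
  W I = I ∧ ∀ J, W J = J → I.1 ⊆ J.1 ∧ I.2 ⊆ J.2

/-- A rule of a normal logic program: `head ← pos, ∼neg`. -/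
structure NRule (A : Type u) where
  head : A
  pos : Set A
  neg : Set A

/-- A normal logic program: a set of rules. -/
abbrev NProgram (A : Type u) : Type u := Set (NRule A)

/-- Structural conditions in the definition of a normal logic program: a countable
set of ground rules with finite bodies. -/
def NProgram.WellFormed (P : NProgram A) : Prop :=
  P.Countable ∧ ∀ r ∈ P, r.pos.Finite ∧ r.neg.Finite

/-- The immediate consequence operator `T_Π` on 3-valued interpretations. -/
def TP (P : NProgram A) (I : Interp A) : Set A :=
  {a | ∃ r ∈ P, r.head = a ∧ r.pos ⊆ I.1 ∧ r.neg ⊆ I.2}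

/-- `S` is an unfounded set of program `P` with respect to interpretation `I = ⟨T, F⟩`. -/
def PUnfounded (P : NProgram A) (I : Interp A) (S : Set A) : Prop :=
  ∀ p ∈ S, ∀ r ∈ P, r.head = p →
    (r.pos ∩ (I.2 ∪ S)).Nonempty ∨ (r.neg ∩ I.1).Nonempty

/-- `U_Π(I)`: the greatest unfounded set (union of all unfounded sets). -/
def UP (P : NProgram A) (I : Interp A) : Set A :=
  ⋃₀ {S | PUnfounded P I S}

/-- `W_Π(I) = ⟨T_Π(I), U_Π(I)⟩`. -/
def WP (P : NProgram A) (I : Interp A) : Interp A := (TP P I, UP P I)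

/-- Transfinite iteration of an operator `W` from `⊥`, taking suprema at limit ordinals. -/
noncomputable def iterW {α : Type*} [CompleteLattice α] (W : α → α) : Ordinal.{0} → α :=
  fun o =>
    Ordinal.limitRecOn (motive := fun _ => α) o ⊥ (fun _ ih => W ih)
      (fun o' _ ih => ⨆ x : Set.Iio o', ih x.1 x.2)

/-- One step of the immediate consequence operator for a set of defeasible-theory rules. -/
def TRstep (R : Set (DRule A)) (S : Set (Lit A)) : Set (Lit A) :=
  {p | ∃ r ∈ R, r.head = p ∧ r.body ⊆ S}

/-- The finite iterates `T_R ↑ n`. -/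
def TRiter (R : Set (DRule A)) : ℕ → Set (Lit A)
  | 0 => ∅
  | n + 1 => TRstep R (TRiter R n)

/-- `Cl(R) = T_R ↑ ω`. -/
def ClR (R : Set (DRule A)) : Set (Lit A) := ⋃ n, TRiter R n

/-- The `α`-reduct `D_α^S` of a defeasible theory. -/
def alphaReduct (D : DTheory A) (S : Set (Lit A)) : Set (DRule A) :=
  D.Rs ∪ {r ∈ D.Rd | ∀ c ∈ D.conflicts, r.head ∈ c → ∃ q ∈ c \ {r.head}, q ∉ S}

/-- The ambiguity-propagating operator `α_D(S) = Cl(D_α^S)`. -/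
def alphaOp (D : DTheory A) (S : Set (Lit A)) : Set (Lit A) := ClR (alphaReduct D S)

/-- The `β`-reduct `D_β^S` of a defeasible theory. -/
def betaReduct (D : DTheory A) (S : Set (Lit A)) : Set (DRule A) :=
  D.Rs ∪ {r ∈ D.Rd | ∀ c ∈ D.conflicts, r.head ∈ c →
    ∃ q ∈ c \ {r.head}, ∀ s ∈ D.rules, s.head = q → (¬ s.body ⊆ S ∨ D.prec s r)}

/-- The ambiguity-blocking operator `β_D(S) = Cl(D_β^S)`. -/
def betaOp (D : DTheory A) (S : Set (Lit A)) : Set (Lit A) := ClR (betaReduct D S)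

/-- `S` is an `α`-stable set of `D`. -/
def AlphaStable (D : DTheory A) (S : Set (Lit A)) : Prop := alphaOp D S = S

/-- `S` is a `β`-stable set of `D`. -/
def BetaStable (D : DTheory A) (S : Set (Lit A)) : Prop := betaOp D S = S

/-- The sequence `X_D↑λ`: `X↑0 = ∅`, `X↑(λ+1) = β_D(β_D(X↑λ))`, unions at limits. -/
noncomputable def Xseq (D : DTheory A) : Ordinal.{0} → Set (Lit A) :=
  iterW (fun S => betaOp D (betaOp D S))

/-- The Gelfond–Lifschitz reduct `Π^S`. -/
def glReduct (P : NProgram A) (S : Set A) : NProgram A :=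
  {r' | ∃ r ∈ P, r.neg ∩ S = ∅ ∧ r' = NRule.mk r.head r.pos ∅}

/-- One step of the immediate consequence operator for a NAF-free program. -/
def TPstep (P : NProgram A) (S : Set A) : Set A :=
  {a | ∃ r ∈ P, r.head = a ∧ r.pos ⊆ S}

/-- The finite iterates `T_Π ↑ n` of a NAF-free program. -/
def TPiter (P : NProgram A) : ℕ → Set A
  | 0 => ∅
  | n + 1 => TPstep P (TPiter P n)

/-- `Cl(Π) = T_Π ↑ ω`. -/
def ClP (P : NProgram A) : Set A := ⋃ n, TPiter P n

/-- The Gelfond–Lifschitz operator `γ_Π(S) = Cl(Π^S)`. -/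
def gamma (P : NProgram A) (S : Set A) : Set A := ClP (glReduct P S)

/-- `S` is a stable model of `P`. -/
def StableModel (P : NProgram A) (S : Set A) : Prop := gamma P S = S

/-- `Prod(C[p])`: all sets obtained by choosing one literal other than `p` from each
conflict set containing `p`. -/
def ProdC (D : DTheory A) (p : Lit A) : Set (Set (Lit A)) :=
  {Q | ∃ f : Set (Lit A) → Lit A,
    (∀ c ∈ D.conflicts, p ∈ c → f c ∈ c \ {p}) ∧
    Q = f '' {c ∈ D.conflicts | p ∈ c}}

/-- The logic program translation `Π_D` of a defeasible theory `D` (negative literals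
are treated as fresh atoms, so the atoms of the program are the literals of `D`). -/
def lpTrans (D : DTheory A) : NProgram (Lit A) :=
  {r' | ∃ r ∈ D.Rs, r' = NRule.mk r.head r.body ∅} ∪
  {r' | ∃ r ∈ D.Rd, ∃ Q ∈ ProdC D r.head, r' = NRule.mk r.head r.body Q}

/-- The explicit version `Φ` of a normal program `Π`: atoms of `Φ` are the literals
over the atoms of `Π` (`¬p` being a fresh atom). -/
def explicitVer (P : NProgram A) : NProgram (Lit A) :=
  {r' | ∃ r ∈ P, r' = NRule.mk (Lit.pos r.head) (Lit.pos '' r.pos ∪ Lit.neg '' r.neg) ∅} ∪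
  {r' | ∃ p : A, r' = NRule.mk (Lit.neg p) ∅ {Lit.pos p}}

/-- The minimal conflict sets over atom type `A`. -/
def CMin (A : Type u) : Set (Set (Lit A)) :=
  {c | ∃ p : A, c = ({Lit.pos p, Lit.neg p} : Set (Lit A))}

/-- The defeasible theory translation `D_Π` of a normal program `Π`: each program rule
becomes a strict rule (default literals `∼b` becoming negative literals `¬b`), and each
atom `p` yields a presumption `∅ ⇒ ¬p`; conflict sets are minimal and `≺` is empty. -/
def dtTrans (P : NProgram A) : DTheory A :=
  { rules :=
      {e | ∃ r ∈ P, e = DRule.mk RuleKind.strict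
            (Lit.pos '' r.pos ∪ Lit.neg '' r.neg) (Lit.pos r.head)} ∪
      {e | ∃ p : A, e = DRule.mk RuleKind.defeasible ∅ (Lit.neg p)}
    conflicts := CMin A
    prec := fun _ _ => False }

/-- `M^¬ = M ∪ {¬p : p ∉ M}`, atoms being identified with positive literals. -/
def negCompl (M : Set A) : Set (Lit A) :=
  Lit.pos '' M ∪ Lit.neg '' {p | p ∉ M}

end DLWFS

namespace DLWFS

section IterW

variable {α : Type*} [CompleteLattice α]

lemma iterW_zero (W : α → α) : iterW W 0 = ⊥ :=
  Ordinal.limitRecOn_zero _ _ _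

lemma iterW_succ (W : α → α) (o : Ordinal) :
    iterW W (Order.succ o) = W (iterW W o) :=
  Ordinal.limitRecOn_succ _ _ _ _

lemma iterW_limit (W : α → α) {o : Ordinal} (h : Order.IsSuccLimit o) :
    iterW W o = ⨆ x : Set.Iio o, iterW W x.1 :=
  Ordinal.limitRecOn_limit _ _ _ _ h

lemma iterW_le_apply {W : α → α} (hW : Monotone W) :
    ∀ o : Ordinal, iterW W o ≤ W (iterW W o) := by
  intro o
  induction o using Ordinal.induction with
  | h o IH =>
    rcases Ordinal.zero_or_succ_or_isSuccLimit o with h0 | ⟨a, ha⟩ | hl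
    · subst h0; rw [iterW_zero]; exact bot_le
    · subst ha; rw [iterW_succ]; exact hW (IH a (Order.lt_succ a))
    · rw [iterW_limit W hl]
      apply iSup_le
      rintro ⟨a, hao⟩
      exact (IH a hao).trans
        (hW (le_iSup (fun x : Set.Iio o => iterW W x.1) ⟨a, hao⟩))

lemma iterW_mono {W : α → α} (hW : Monotone W) :
    ∀ b a : Ordinal, a ≤ b → iterW W a ≤ iterW W b := by
  intro b
  induction b using Ordinal.induction with
  | h b IH =>
    intro a hab
    rcases eq_or_lt_of_le hab with rfl | hlt
    · exact le_rfl
    rcases Ordinal.zero_or_succ_or_isSuccLimit b with h0 | ⟨c, hc⟩ | hl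
    · exact absurd (h0 ▸ hlt) (not_lt_of_ge (zero_le (a := a)))
    · subst hc
      have hac : a ≤ c := Order.lt_succ_iff.mp hlt
      calc iterW W a ≤ iterW W c := IH c (Order.lt_succ c) a hac
        _ ≤ W (iterW W c) := iterW_le_apply hW c
        _ = iterW W (Order.succ c) := (iterW_succ W c).symm
    · rw [iterW_limit W hl]
      exact le_iSup (fun x : Set.Iio b => iterW W x.1) ⟨a, hlt⟩

end IterW

section Beta

variable {A : Type*}

lemma TRstep_mono (R : Set (DRule A)) {S S' : Set (Lit A)} (h : S ⊆ S') :
    TRstep R S ⊆ TRstep R S' := by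
  rintro p ⟨r, hr, hh, hb⟩; exact ⟨r, hr, hh, hb.trans h⟩

lemma TRiter_mono (R : Set (DRule A)) : Monotone (TRiter R) := by
  apply monotone_nat_of_le_succ
  intro n
  induction n with
  | zero => exact Set.empty_subset _
  | succ n IH => exact TRstep_mono R IH

lemma finite_subset_ClR {R : Set (DRule A)} {B : Set (Lit A)} (hB : B.Finite)
    (h : B ⊆ ClR R) : ∃ n, B ⊆ TRiter R n := by
  classical
  refine Set.Finite.induction_on
    (motive := fun B _ => B ⊆ ClR R → ∃ n, B ⊆ TRiter R n) B hB
    (fun _ => ⟨0, Set.empty_subset _⟩) ?_ h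
  intro a s ha hs IH h
  obtain ⟨n, hn⟩ := IH (fun x hx => h (Set.mem_insert_of_mem a hx))
  obtain ⟨m, hm⟩ := Set.mem_iUnion.mp (h (Set.mem_insert a s))
  refine ⟨max n m, ?_⟩
  rintro x (rfl | hx)
  · exact TRiter_mono R (le_max_right n m) hm
  · exact TRiter_mono R (le_max_left n m) (hn hx)

lemma betaReduct_anti (D : DTheory A) {S S' : Set (Lit A)} (h : S ⊆ S') :
    betaReduct D S' ⊆ betaReduct D S := by
  rintro r (hr | ⟨hrd, hcond⟩)
  · exact Or.inl hr
  · refine Or.inr ⟨hrd, fun c hc hhc => ?_⟩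
    obtain ⟨q, hq, hall⟩ := hcond c hc hhc
    refine ⟨q, hq, fun s hs hsh => ?_⟩
    rcases hall s hs hsh with hns | hp
    · exact Or.inl fun hsub => hns (hsub.trans h)
    · exact Or.inr hp

lemma TRiter_mono_R {R R' : Set (DRule A)} (h : R ⊆ R') :
    ∀ n, TRiter R n ⊆ TRiter R' n := by
  intro n
  induction n with
  | zero => exact subset_rfl
  | succ n IH => rintro p ⟨r, hr, hh, hb⟩; exact ⟨r, h hr, hh, hb.trans IH⟩

lemma ClR_mono {R R' : Set (DRule A)} (h : R ⊆ R') : ClR R ⊆ ClR R' := by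
  intro p hp
  obtain ⟨n, hn⟩ := Set.mem_iUnion.mp hp
  exact Set.mem_iUnion.mpr ⟨n, TRiter_mono_R h n hn⟩

lemma betaOp_anti (D : DTheory A) {S S' : Set (Lit A)} (h : S ⊆ S') :
    betaOp D S' ⊆ betaOp D S :=
  ClR_mono (betaReduct_anti D h)

lemma betaBeta_mono (D : DTheory A) :
    Monotone (fun S => betaOp D (betaOp D S)) :=
  fun _ _ h => betaOp_anti D (betaOp_anti D h)

lemma Xseq_mono (D : DTheory A) {a b : Ordinal} (h : a ≤ b) :
    Xseq D a ⊆ Xseq D b :=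
  iterW_mono (betaBeta_mono D) b a h

lemma Xseq_succ (D : DTheory A) (o : Ordinal) :
    Xseq D (Order.succ o) = betaOp D (betaOp D (Xseq D o)) :=
  iterW_succ _ o

end Beta

/-- Let `D` be a defeasible theory and `(⟨T_{D,λ}, F_{D,λ}⟩)` the transfinite sequence
of interpretations under the NDL well-founded semantics. For every ordinal `λ` there is
an ordinal `η` such that for every literal `p`: if `p ∈ T_{D,λ}` then `p ∈ X_D↑η`, and
if `p ∈ F_{D,λ}` then `p ∉ β_D(X_D↑η)`. -/
theorem beta_iteration_complete {A : Type*} (D : DTheory A) (hwf : D.WellFormed) :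
    ∀ lam : Ordinal, ∃ eta : Ordinal, ∀ p : Lit A,
      (p ∈ (iterW (WN D) lam).1 → p ∈ Xseq D eta) ∧
      (p ∈ (iterW (WN D) lam).2 → p ∉ betaOp D (Xseq D eta)) := by
  classical
  have hbody : ∀ r ∈ D.rules, r.body.Finite := hwf.2.2.1
  intro lam
  induction lam using Ordinal.induction with
  | h lam IH =>
  rcases Ordinal.zero_or_succ_or_isSuccLimit lam with h0 | ⟨mu, hmu⟩ | hl
  · subst h0
    refine ⟨0, fun p => ⟨?_, ?_⟩⟩ <;>
      · rw [iterW_zero]; intro h; exact absurd h (Set.notMem_empty p)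
  · subst hmu
    obtain ⟨eta, heta⟩ := IH mu (Order.lt_succ mu)
    set I := iterW (WN D) mu with hI
    set Y := Xseq D eta with hY
    have hTY : I.1 ⊆ Y := fun x hx => (heta x).1 hx
    have hFY : ∀ x ∈ I.2, x ∉ betaOp D Y := fun x hx => (heta x).2 hx
    have hYY' : Y ⊆ Xseq D (Order.succ eta) := Xseq_mono D (Order.le_succ eta)
    refine ⟨Order.succ eta, fun p => ⟨?_, ?_⟩⟩
    · rw [iterW_succ]
      rintro ⟨r, hrR, hrhead, hrbody, hkind⟩
      rw [Xseq_succ]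
      have hrmem : r ∈ betaReduct D (betaOp D Y) := by
        rcases hkind with hstrict | ⟨hdef, hcond⟩
        · exact Or.inl ⟨hrR, hstrict⟩
        · refine Or.inr ⟨⟨hrR, hdef⟩, fun c hc hpc => ?_⟩
          obtain ⟨q, hq, hs⟩ := hcond c hc (hrhead ▸ hpc)
          refine ⟨q, by rw [hrhead]; exact hq, fun s hsR hshead => ?_⟩
          rcases hs s hsR hshead with hprec | ⟨x, hxb, hxF⟩
          · exact Or.inr hprec
          · exact Or.inl fun hsub => hFY x hxF (hsub hxb)
      have hsub : r.body ⊆ ClR (betaReduct D (betaOp D Y)) := by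
        intro x hx
        have : x ∈ Xseq D (Order.succ eta) := hYY' (hTY (hrbody hx))
        rwa [Xseq_succ] at this
      obtain ⟨n, hn⟩ := finite_subset_ClR (hbody r hrR) hsub
      exact Set.mem_iUnion.mpr ⟨n + 1, ⟨r, hrmem, hrhead, hn⟩⟩
    · rw [iterW_succ]
      rintro ⟨S, hSu, hpS⟩ hpbeta
      set Y' := Xseq D (Order.succ eta) with hY'
      have hbY'Y : betaOp D Y' ⊆ betaOp D Y := betaOp_anti D hYY'
      have hTY' : I.1 ⊆ Y' := hTY.trans hYY'
      -- hpbeta : p ∈ betaOp D Y' = ClR (betaReduct D Y')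
      have hex : ∃ n, ∃ q, q ∈ S ∧ q ∈ TRiter (betaReduct D Y') n := by
        obtain ⟨n, hn⟩ := Set.mem_iUnion.mp hpbeta
        exact ⟨n, p, hpS, hn⟩
      obtain ⟨q, hqS, hqn⟩ := Nat.find_spec hex
      rcases Nat.eq_zero_or_pos (Nat.find hex) with hz | hpos
      · rw [hz] at hqn; exact absurd hqn (Set.notMem_empty q)
      obtain ⟨m, hm⟩ : ∃ m, Nat.find hex = m + 1 :=
        ⟨Nat.find hex - 1, (Nat.succ_pred_eq_of_pos hpos).symm⟩
      rw [hm] at hqn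
      obtain ⟨r, hrRed, hrh, hrb⟩ := hqn
      have hnotFS : ¬ (r.body ∩ (I.2 ∪ S)).Nonempty := by
        rintro ⟨x, hxb, hxFS⟩
        have hxiter : x ∈ TRiter (betaReduct D Y') m := hrb hxb
        rcases hxFS with hxF | hxS
        · exact hFY x hxF (hbY'Y (Set.mem_iUnion.mpr ⟨m, hxiter⟩))
        · exact Nat.find_min hex (by omega) ⟨x, hxS, hxiter⟩
      rcases hrRed with ⟨hrR, hrstrict⟩ | ⟨⟨hrR, hrdef⟩, hcond⟩
      · exact hnotFS ((hSu q hqS).1 r ⟨hrR, hrstrict⟩ hrh)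
      · rcases (hSu q hqS).2 r ⟨hrR, hrdef⟩ hrh with hne | ⟨c, hcC, hqc, hall⟩
        · exact hnotFS hne
        obtain ⟨q', hq'mem, hsall⟩ := hcond c hcC (hrh.symm ▸ hqc)
        obtain ⟨s, hsR, hshead, hsbodyT, hnprec⟩ := hall q' (by rwa [hrh] at hq'mem)
        rcases hsall s hsR hshead with hnsub | hprec
        · exact hnsub (hsbodyT.trans hTY')
        · exact hnprec hprec
  · have hIH : ∀ x : Set.Iio lam, ∃ eta : Ordinal, ∀ p : Lit A,
        (p ∈ (iterW (WN D) x.1).1 → p ∈ Xseq D eta) ∧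
        (p ∈ (iterW (WN D) x.1).2 → p ∉ betaOp D (Xseq D eta)) :=
      fun x => IH x.1 x.2
    choose g hg using hIH
    refine ⟨⨆ x, g x, fun p => ⟨?_, ?_⟩⟩
    · intro hp
      rw [iterW_limit _ hl, Prod.fst_iSup] at hp
      obtain ⟨x, hx⟩ := Set.mem_iUnion.mp hp
      exact Xseq_mono D (Ordinal.le_iSup g x) ((hg x p).1 hx)
    · intro hp hpb
      rw [iterW_limit _ hl, Prod.snd_iSup] at hp
      obtain ⟨x, hx⟩ := Set.mem_iUnion.mp hp
      exact (hg x p).2 hx (betaOp_anti D (Xseq_mono D (Ordinal.le_iSup g x)) hpb)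

end DLWFS
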